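/- Let 𝔰 be a solvable complex Lie algebra in the canonical form for a Heisenberg nilradical 𝔥(m) with f-dimensional extension. Then k(𝔰) ≤ 2m + 2, i.e., the number of distinct irreducible factors (up to scalar multiples) of the characteristic polynomial Q_𝔰 is at most 2m + 2. -/

import Mathlib

/-- The characteristic polynomial `Q_L(z₀, …, z_N) = det (z₀ I + z₁ ad x₁ + ⋯ + z_N ad x_N)`
of an `N`-dimensional complex Lie algebra with ordered basis `(x₁, …, x_N)`; the variable of
index `0` is `z₀` and the variable of index `k.succ` is attached to the basis vector `x_k`. -/
noncomputable def lieCharPoly (N : ℕ) (L : Type) [LieRing L] [LieAlgebra ℂ L]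
    (b : Module.Basis (Fin N) ℂ L) : MvPolynomial (Fin (N + 1)) ℂ :=
  Matrix.det
    ((MvPolynomial.X 0 : MvPolynomial (Fin (N + 1)) ℂ) •
        (1 : Matrix (Fin N) (Fin N) (MvPolynomial (Fin (N + 1)) ℂ)) +
      ∑ k : Fin N,
        (MvPolynomial.X k.succ : MvPolynomial (Fin (N + 1)) ℂ) •
          ((LinearMap.toMatrix b b (LieAlgebra.ad ℂ L (b k))).map (MvPolynomial.C)))

/-- `k(Q)`: the number of distinct irreducible factors of `Q` up to scalar multiples, i.e. the
cardinality of the set of associate classes of irreducible polynomials dividing `Q`. -/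
noncomputable def numIrreducibleFactors {σ : Type} (Q : MvPolynomial σ ℂ) : ℕ :=
  {a : Associates (MvPolynomial σ ℂ) | Irreducible a ∧ a ∣ Associates.mk Q}.ncard

/-- The index of the central element `h` in the canonical basis
`(h, p₁, …, p_m, q₁, …, q_m, f₁, …, f_f)`. -/
def idxH (m f : ℕ) : Fin (2 * m + 1 + f) := ⟨0, by omega⟩

/-- The index of `p_i` in the canonical basis. -/
def idxP (m f : ℕ) (i : Fin m) : Fin (2 * m + 1 + f) := ⟨1 + i.val, by have := i.isLt; omega⟩

/-- The index of `q_i` in the canonical basis. -/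
def idxQ (m f : ℕ) (i : Fin m) : Fin (2 * m + 1 + f) :=
  ⟨1 + m + i.val, by have := i.isLt; omega⟩

/-- The index of `ξ_i` in the canonical basis, where `ξ = (p₁, …, p_m, q₁, …, q_m)`. -/
def idxXi (m f : ℕ) (i : Fin (2 * m)) : Fin (2 * m + 1 + f) :=
  ⟨1 + i.val, by have := i.isLt; omega⟩

/-- The index of the extension element `f_α` in the canonical basis. -/
def idxF (m f : ℕ) (α : Fin f) : Fin (2 * m + 1 + f) :=
  ⟨2 * m + 1 + α.val, by have := α.isLt; omega⟩

/-- The canonical symplectic structure matrix `J` on `ℂ^{2m}` (with respect to the ordering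
`(p₁, …, p_m, q₁, …, q_m)`), so that `𝔰𝔭(2m, ℂ) = {X | Xᵀ J + J X = 0}`. -/
def symplJ (m : ℕ) : Matrix (Fin (2 * m)) (Fin (2 * m)) ℂ :=
  Matrix.of fun i j =>
    if i.val < m ∧ j.val = i.val + m then 1
    else if j.val < m ∧ i.val = j.val + m then -1 else 0

namespace HeisAux

open MvPolynomial UniqueFactorizationMonoid

variable {σ : Type}

lemma S_subset_image {Q : MvPolynomial σ ℂ} (hQ : Q ≠ 0) :
    {a : Associates (MvPolynomial σ ℂ) | Irreducible a ∧ a ∣ Associates.mk Q} ⊆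
      Associates.mk '' {y : MvPolynomial σ ℂ | y ∈ factors Q} := by
  rintro x ⟨hirr, hdvd⟩
  obtain ⟨y, rfl⟩ := Associates.mk_surjective x
  rw [Associates.irreducible_mk] at hirr
  rw [Associates.mk_dvd_mk] at hdvd
  obtain ⟨q, hq, hyq⟩ := exists_mem_factors_of_dvd hQ hirr hdvd
  exact ⟨q, hq, (Associates.mk_eq_mk_iff_associated.mpr hyq).symm⟩

lemma S_finite {Q : MvPolynomial σ ℂ} (hQ : Q ≠ 0) :
    {a : Associates (MvPolynomial σ ℂ) | Irreducible a ∧ a ∣ Associates.mk Q}.Finite :=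
  (((factors Q).finite_toSet).image _).subset (S_subset_image hQ)

lemma numIrr_mul_le {p q : MvPolynomial σ ℂ} (hp : p ≠ 0) (hq : q ≠ 0) :
    numIrreducibleFactors (p * q) ≤ numIrreducibleFactors p + numIrreducibleFactors q := by
  have hsub : {a : Associates (MvPolynomial σ ℂ) | Irreducible a ∧ a ∣ Associates.mk (p * q)} ⊆
      {a : Associates (MvPolynomial σ ℂ) | Irreducible a ∧ a ∣ Associates.mk p} ∪
      {a : Associates (MvPolynomial σ ℂ) | Irreducible a ∧ a ∣ Associates.mk q} := by
    rintro x ⟨hirr, hdvd⟩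
    obtain ⟨y, rfl⟩ := Associates.mk_surjective x
    rw [Associates.irreducible_mk] at hirr
    rw [Associates.mk_dvd_mk] at hdvd
    have hyp : Prime y := (irreducible_iff_prime).mp hirr
    rcases hyp.2.2 _ _ hdvd with h | h
    · exact Or.inl ⟨Associates.irreducible_mk.mpr hirr, Associates.mk_dvd_mk.mpr h⟩
    · exact Or.inr ⟨Associates.irreducible_mk.mpr hirr, Associates.mk_dvd_mk.mpr h⟩
  calc numIrreducibleFactors (p * q)
      ≤ ({a : Associates (MvPolynomial σ ℂ) | Irreducible a ∧ a ∣ Associates.mk p} ∪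
         {a : Associates (MvPolynomial σ ℂ) | Irreducible a ∧ a ∣ Associates.mk q}).ncard :=
        Set.ncard_le_ncard hsub ((S_finite hp).union (S_finite hq))
    _ ≤ _ := Set.ncard_union_le _ _

lemma numIrr_prime_pow_le {p : MvPolynomial σ ℂ} (hp : Prime p) (n : ℕ) :
    numIrreducibleFactors (p ^ n) ≤ 1 := by
  have hsub : {a : Associates (MvPolynomial σ ℂ) | Irreducible a ∧ a ∣ Associates.mk (p ^ n)} ⊆
      {Associates.mk p} := by
    rintro x ⟨hirr, hdvd⟩
    obtain ⟨y, rfl⟩ := Associates.mk_surjective x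
    rw [Associates.irreducible_mk] at hirr
    rw [Associates.mk_dvd_mk] at hdvd
    have hyp : Prime y := (irreducible_iff_prime).mp hirr
    have : y ∣ p := hyp.dvd_of_dvd_pow hdvd
    have : Associated y p := hirr.associated_of_dvd hp.irreducible this
    simpa using Associates.mk_eq_mk_iff_associated.mpr this
  calc numIrreducibleFactors (p ^ n) ≤ ({Associates.mk p} : Set _).ncard :=
        Set.ncard_le_ncard hsub (Set.finite_singleton _)
    _ = 1 := Set.ncard_singleton _

lemma ncard_mem_multiset_le {α : Type*} (s : Multiset α) :
    {y | y ∈ s}.ncard ≤ Multiset.card s := by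
  induction s using Multiset.induction with
  | empty => simp
  | cons a s ih =>
    have h : {y | y ∈ a ::ₘ s} = insert a {y | y ∈ s} := by ext; simp
    rw [h]
    calc (insert a {y | y ∈ s}).ncard ≤ {y | y ∈ s}.ncard + 1 := Set.ncard_insert_le a _
      _ ≤ Multiset.card (a ::ₘ s) := by simpa [Multiset.card_cons] using Nat.add_le_add_right ih 1

lemma numIrr_le_of_monic {n : ℕ} (g : MvPolynomial (Fin (n + 1)) ℂ)
    (hg : (finSuccEquiv ℂ n g).Monic) :
    numIrreducibleFactors g ≤ (finSuccEquiv ℂ n g).natDegree := by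
  have hg0 : g ≠ 0 := by
    rintro rfl
    rw [map_zero] at hg
    exact hg.ne_zero rfl
  -- numIrr g ≤ card of factors
  have h1 : numIrreducibleFactors g ≤ Multiset.card (factors g) := by
    calc numIrreducibleFactors g
        ≤ (Associates.mk '' {y : MvPolynomial (Fin (n+1)) ℂ | y ∈ factors g}).ncard :=
          Set.ncard_le_ncard (S_subset_image hg0) (((factors g).finite_toSet).image _)
      _ ≤ ({y : MvPolynomial (Fin (n+1)) ℂ | y ∈ factors g}).ncard :=
          Set.ncard_image_le ((factors g).finite_toSet)
      _ ≤ Multiset.card (factors g) := ncard_mem_multiset_le _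
  refine h1.trans ?_
  -- card of factors ≤ natDegree
  set φ := (finSuccEquiv ℂ n) with hφ
  have key : ∀ y ∈ factors g, 1 ≤ (φ y).natDegree := by
    intro y hy
    by_contra hlt
    push_neg at hlt
    have h0 : (φ y).natDegree = 0 := by omega
    obtain ⟨t, ht⟩ := dvd_of_mem_factors hy
    have hy0 : y ≠ 0 := (prime_of_factor y hy).ne_zero
    have ht0 : t ≠ 0 := by rintro rfl; exact hg0 (by simp [ht])
    have hmul : φ g = φ y * φ t := by rw [ht, map_mul]
    have hlc : (φ y).leadingCoeff * (φ t).leadingCoeff = 1 := by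
      have := hg
      rw [Polynomial.Monic, hmul, Polynomial.leadingCoeff_mul] at this
      exact this
    have hulc : IsUnit (φ y).leadingCoeff := IsUnit.of_mul_eq_one _ hlc
    have hyC : φ y = Polynomial.C ((φ y).coeff 0) :=
      (Polynomial.eq_C_of_natDegree_eq_zero h0)
    have : IsUnit (φ y) := by
      rw [hyC]
      refine Polynomial.isUnit_C.mpr ?_
      have : (φ y).leadingCoeff = (φ y).coeff 0 := by
        rw [Polynomial.leadingCoeff, h0]
      rwa [this] at hulc
    have : IsUnit y := by
      have := this.map (finSuccEquiv ℂ n).symm.toAlgHom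
      simpa using this
    exact (irreducible_of_factor y hy).not_isUnit this
  obtain ⟨u, hu⟩ := (factors_prod hg0)
  have hmap : φ g = ((factors g).map fun y => φ y).prod * φ u := by
    conv_lhs => rw [← hu]
    rw [map_mul]
    congr 1
    simpa using map_multiset_prod φ (factors g)
  have hne : (0 : Polynomial (MvPolynomial (Fin n) ℂ)) ∉ (factors g).map fun y => φ y := by
    intro h
    obtain ⟨y, hy, hy0⟩ := Multiset.mem_map.mp h
    exact (prime_of_factor y hy).ne_zero (by simpa using (map_eq_zero_iff φ φ.injective).mp hy0)
  have hu0 : IsUnit (φ (u : MvPolynomial (Fin (n+1)) ℂ)) := u.isUnit.map φ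
  have hprod0 : ((factors g).map fun y => φ y).prod ≠ 0 := by
    intro h
    rw [Multiset.prod_eq_zero_iff] at h
    exact hne h
  have hu0' : φ (u : MvPolynomial (Fin (n+1)) ℂ) ≠ 0 := hu0.ne_zero
  have hdeg : (φ g).natDegree =
      (((factors g).map fun y => φ y).map Polynomial.natDegree).sum := by
    rw [hmap, Polynomial.natDegree_mul hprod0 hu0',
      Polynomial.natDegree_eq_zero_of_isUnit hu0, add_zero,
      Polynomial.natDegree_multiset_prod _ hne]
  rw [hφ] at hdeg
  rw [hdeg]
  have hb := Multiset.card_nsmul_le_sum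
    (s := ((factors g).map fun y => φ y).map Polynomial.natDegree) (a := 1)
    (by
      intro x hx
      obtain ⟨z, hz, rfl⟩ := Multiset.mem_map.mp hx
      obtain ⟨y, hy, rfl⟩ := Multiset.mem_map.mp hz
      exact key y hy)
  simpa [Multiset.card_map] using hb


open MvPolynomial

lemma prime_X0 (n : ℕ) : Prime (X 0 : MvPolynomial (Fin (n + 1)) ℂ) := by
  have hX : Prime (Polynomial.X : Polynomial (MvPolynomial (Fin n) ℂ)) := Polynomial.prime_X
  constructor
  · exact X_ne_zero 0
  constructor
  · intro hu
    have := hu.map (finSuccEquiv ℂ n)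
    rw [finSuccEquiv_X_zero] at this
    exact hX.2.1 this
  · intro p q hdvd
    have h2 : (Polynomial.X : Polynomial (MvPolynomial (Fin n) ℂ)) ∣
        finSuccEquiv ℂ n p * finSuccEquiv ℂ n q := by
      rw [← map_mul, ← finSuccEquiv_X_zero (R := ℂ) (n := n)]
      exact map_dvd _ hdvd
    rcases hX.2.2 _ _ h2 with h | h
    · left
      rw [← finSuccEquiv_X_zero (R := ℂ) (n := n)] at h
      have := map_dvd (finSuccEquiv ℂ n).symm h
      simpa using this
    · right
      rw [← finSuccEquiv_X_zero (R := ℂ) (n := n)] at h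
      have := map_dvd (finSuccEquiv ℂ n).symm h
      simpa using this




lemma idxH_ne_idxF (m f : ℕ) (α : Fin f) : idxH m f ≠ idxF m f α := by
  simp only [idxH, idxF, ne_eq, Fin.mk.injEq]; omega

lemma idxXi_ne_idxF (m f : ℕ) (l : Fin (2 * m)) (α : Fin f) : idxXi m f l ≠ idxF m f α := by
  simp only [idxXi, idxF, ne_eq, Fin.mk.injEq]; have := l.isLt; omega

lemma idxXi_ne_idxH (m f : ℕ) (l : Fin (2 * m)) : idxXi m f l ≠ idxH m f := by
  simp only [idxXi, idxH, ne_eq, Fin.mk.injEq]; omega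

lemma idxF_ne_idxH (m f : ℕ) (α : Fin f) : idxF m f α ≠ idxH m f := by
  simp only [idxF, idxH, ne_eq, Fin.mk.injEq]; omega

lemma idxF_inj (m f : ℕ) {α β : Fin f} : idxF m f α = idxF m f β ↔ α = β := by
  simp only [idxF, ne_eq, Fin.mk.injEq]; omega

lemma idxXi_inj (m f : ℕ) {i j : Fin (2 * m)} : idxXi m f i = idxXi m f j ↔ i = j := by
  simp only [idxXi, ne_eq, Fin.mk.injEq]; omega

lemma fin_cases3 (m f : ℕ) (i : Fin (2 * m + 1 + f)) :
    i = idxH m f ∨ (∃ x : Fin (2 * m), i = idxXi m f x) ∨ ∃ α : Fin f, i = idxF m f α := by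
  by_cases h0 : i.val = 0
  · exact Or.inl (by simp only [idxH, Fin.ext_iff]; omega)
  by_cases h1 : i.val < 2 * m + 1
  · exact Or.inr (Or.inl ⟨⟨i.val - 1, by omega⟩, by simp only [idxXi, Fin.ext_iff]; omega⟩)
  · exact Or.inr (Or.inr ⟨⟨i.val - (2 * m + 1), by have := i.isLt; omega⟩,
      by simp only [idxF, Fin.ext_iff]; omega⟩)

lemma xi_cases (m f : ℕ) (x : Fin (2 * m)) :
    (∃ i : Fin m, idxXi m f x = idxP m f i) ∨ (∃ i : Fin m, idxXi m f x = idxQ m f i) := by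
  by_cases h : x.val < m
  · exact Or.inl ⟨⟨x.val, h⟩, by simp only [idxXi, idxP, Fin.ext_iff]⟩
  · exact Or.inr ⟨⟨x.val - m, by have := x.isLt; omega⟩,
      by simp only [idxXi, idxQ, Fin.ext_iff]; omega⟩

def heisEquiv (m f : ℕ) : (Unit ⊕ Fin (2 * m)) ⊕ Fin f ≃ Fin (2 * m + 1 + f) where
  toFun x := Sum.elim (Sum.elim (fun _ => idxH m f) (idxXi m f)) (idxF m f) x
  invFun i :=
    if h0 : i.val = 0 then Sum.inl (Sum.inl ())
    else if h1 : i.val < 2 * m + 1 then Sum.inl (Sum.inr ⟨i.val - 1, by omega⟩)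
    else Sum.inr ⟨i.val - (2 * m + 1), by have := i.isLt; omega⟩
  left_inv := by
    rintro ((⟨⟩ | x) | α)
    · simp [idxH]
    · have hx := x.isLt
      dsimp only [Sum.elim_inl, Sum.elim_inr, idxXi]
      simp only [dif_neg (show ¬ (1 + (x : ℕ) = 0) by omega),
        dif_pos (show 1 + (x : ℕ) < 2 * m + 1 by omega)]
      simp
    · dsimp only [Sum.elim_inr, idxF]
      simp only [dif_neg (show ¬ (2 * m + 1 + (α : ℕ) = 0) by omega),
        dif_neg (show ¬ (2 * m + 1 + (α : ℕ) < 2 * m + 1) by omega)]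
      simp
  right_inv := by
    intro i
    by_cases h0 : i.val = 0
    · simp only [dif_pos h0, Sum.elim_inl]
      exact Fin.ext (by simp [idxH, h0])
    · by_cases h1 : i.val < 2 * m + 1
      · simp only [dif_neg h0, dif_pos h1, Sum.elim_inl, Sum.elim_inr]
        exact Fin.ext (by simp [idxXi]; omega)
      · simp only [dif_neg h0, dif_neg h1, Sum.elim_inr]
        exact Fin.ext (by simp [idxF]; have := i.isLt; omega)


end HeisAux

/-- For a solvable complex Lie algebra `𝔰` in the canonical form for a
Heisenberg nilradical `𝔥(m)` with `f`-dimensional extension, `k(𝔰) ≤ 2m + 2`: the number of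
distinct irreducible factors (up to scalar multiples) of `Q_𝔰` is at most `2m + 2`. -/
theorem heisenberg_k_le_two_m_add_two
    (m f : ℕ) (hm : 1 ≤ m) (hf : 1 ≤ f)
    (𝔰 : Type) [LieRing 𝔰] [LieAlgebra ℂ 𝔰] [LieAlgebra.IsSolvable 𝔰]
    (b : Module.Basis (Fin (2 * m + 1 + f)) ℂ 𝔰)
    (a : Fin f → ℂ) (X : Fin f → Matrix (Fin (2 * m)) (Fin (2 * m)) ℂ)
    (r : Fin f → Fin f → ℂ)
    (hpq : ∀ i j : Fin m,
      ⁅b (idxP m f i), b (idxQ m f j)⁆ = if i = j then b (idxH m f) else 0)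
    (hpp : ∀ i j : Fin m, ⁅b (idxP m f i), b (idxP m f j)⁆ = 0)
    (hqq : ∀ i j : Fin m, ⁅b (idxQ m f i), b (idxQ m f j)⁆ = 0)
    (hhp : ∀ i : Fin m, ⁅b (idxH m f), b (idxP m f i)⁆ = 0)
    (hhq : ∀ i : Fin m, ⁅b (idxH m f), b (idxQ m f i)⁆ = 0)
    (hfh : ∀ α : Fin f, ⁅b (idxF m f α), b (idxH m f)⁆ = (2 * a α) • b (idxH m f))
    (hfxi : ∀ (α : Fin f) (i : Fin (2 * m)),
      ⁅b (idxF m f α), b (idxXi m f i)⁆ =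
        ∑ j : Fin (2 * m),
          ((a α • (1 : Matrix (Fin (2 * m)) (Fin (2 * m)) ℂ) + X α) j i) • b (idxXi m f j))
    (hff : ∀ α β : Fin f, ⁅b (idxF m f α), b (idxF m f β)⁆ = r α β • b (idxH m f))
    (hskew : ∀ α β : Fin f, r β α = - r α β)
    (hsp : ∀ α : Fin f, (X α).transpose * symplJ m + symplJ m * X α = 0)
    (hcomm : ∀ α β : Fin f, X α * X β = X β * X α) :
    numIrreducibleFactors (lieCharPoly (2 * m + 1 + f) 𝔰 b) ≤ 2 * m + 2 := by

  classical
  set M : Matrix (Fin (2*m+1+f)) (Fin (2*m+1+f)) (MvPolynomial (Fin (2*m+1+f+1)) ℂ) :=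
    (MvPolynomial.X 0 : MvPolynomial (Fin (2*m+1+f+1)) ℂ) • 1 +
      ∑ k : Fin (2*m+1+f), (MvPolynomial.X k.succ : MvPolynomial (Fin (2*m+1+f+1)) ℂ) •
        ((LinearMap.toMatrix b b (LieAlgebra.ad ℂ 𝔰 (b k))).map MvPolynomial.C) with hMdef
  have hQ : lieCharPoly (2*m+1+f) 𝔰 b = M.det := rfl
  have Mentry : ∀ i j, M i j =
      MvPolynomial.X 0 * (if i = j then 1 else 0) +
      ∑ k : Fin (2*m+1+f), MvPolynomial.X k.succ * MvPolynomial.C ((b.repr ⁅b k, b j⁆) i) := by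
    intro i j
    simp only [hMdef, Matrix.add_apply, Matrix.smul_apply, Matrix.sum_apply, Matrix.one_apply,
      Matrix.map_apply, LinearMap.toMatrix_apply, LieAlgebra.ad_apply, smul_eq_mul]
  -- bracket with h lands in the line spanned by h
  have brH : ∀ k : Fin (2*m+1+f), ∃ c : ℂ, ⁅b k, b (idxH m f)⁆ = c • b (idxH m f) := by
    intro k
    rcases HeisAux.fin_cases3 m f k with rfl | ⟨x, rfl⟩ | ⟨α, rfl⟩
    · exact ⟨0, by simp⟩
    · rcases HeisAux.xi_cases m f x with ⟨i, hx⟩ | ⟨i, hx⟩ <;> rw [hx]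
      · exact ⟨0, by rw [← lie_skew, hhp i]; simp⟩
      · exact ⟨0, by rw [← lie_skew, hhq i]; simp⟩
    · exact ⟨2 * a α, hfh α⟩
  -- every bracket lies in span of h and the ξ's
  have brSpan : ∀ k j : Fin (2*m+1+f), ∃ (c : ℂ) (v : Fin (2*m) → ℂ),
      ⁅b k, b j⁆ = c • b (idxH m f) + ∑ l : Fin (2*m), v l • b (idxXi m f l) := by
    intro k j
    rcases HeisAux.fin_cases3 m f k with rfl | ⟨x, rfl⟩ | ⟨α, rfl⟩ <;>
      rcases HeisAux.fin_cases3 m f j with rfl | ⟨y, rfl⟩ | ⟨β, rfl⟩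
    · exact ⟨0, 0, by simp⟩
    · rcases HeisAux.xi_cases m f y with ⟨i, hy⟩ | ⟨i, hy⟩ <;> rw [hy]
      · exact ⟨0, 0, by rw [hhp i]; simp⟩
      · exact ⟨0, 0, by rw [hhq i]; simp⟩
    · exact ⟨-(2 * a β), 0, by rw [← lie_skew, hfh β]; simp⟩
    · rcases HeisAux.xi_cases m f x with ⟨i, hx⟩ | ⟨i, hx⟩ <;> rw [hx]
      · exact ⟨0, 0, by rw [← lie_skew, hhp i]; simp⟩
      · exact ⟨0, 0, by rw [← lie_skew, hhq i]; simp⟩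
    · rcases HeisAux.xi_cases m f x with ⟨i, hx⟩ | ⟨i, hx⟩ <;>
        rcases HeisAux.xi_cases m f y with ⟨i', hy⟩ | ⟨i', hy⟩ <;> rw [hx, hy]
      · exact ⟨0, 0, by rw [hpp i i']; simp⟩
      · refine ⟨if i = i' then 1 else 0, 0, ?_⟩
        rw [hpq i i']
        split_ifs <;> simp
      · refine ⟨if i' = i then -1 else 0, 0, ?_⟩
        rw [← lie_skew, hpq i' i]
        split_ifs <;> simp
      · exact ⟨0, 0, by rw [hqq i i']; simp⟩
    · refine ⟨0, fun l => -((a β • (1 : Matrix (Fin (2*m)) (Fin (2*m)) ℂ) + X β) l x), ?_⟩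
      rw [← lie_skew, hfxi β x, zero_smul, zero_add, ← Finset.sum_neg_distrib]
      simp only [neg_smul]
    · exact ⟨2 * a α, 0, by rw [hfh α]; simp⟩
    · refine ⟨0, fun l => (a α • (1 : Matrix (Fin (2*m)) (Fin (2*m)) ℂ) + X α) l y, ?_⟩
      rw [hfxi α y, zero_smul, zero_add]
    · exact ⟨r α β, 0, by rw [hff α β]; simp⟩
  -- f-components of all brackets vanish
  have brF : ∀ (k j : Fin (2*m+1+f)) (α : Fin f), (b.repr ⁅b k, b j⁆) (idxF m f α) = 0 := by
    intro k j α
    obtain ⟨c, v, hc⟩ := brSpan k j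
    rw [hc]
    simp [Finsupp.single_apply, HeisAux.idxH_ne_idxF m f α, HeisAux.idxXi_ne_idxF m f _ α]
  have brHcol : ∀ (k i : Fin (2*m+1+f)), i ≠ idxH m f → (b.repr ⁅b k, b (idxH m f)⁆) i = 0 := by
    intro k i hi
    obtain ⟨c, hc⟩ := brH k
    rw [hc]
    simp [Finsupp.single_apply, Ne.symm hi]
  have rowF : ∀ (α : Fin f) (j : Fin (2*m+1+f)),
      M (idxF m f α) j = if idxF m f α = j then MvPolynomial.X 0 else 0 := by
    intro α j
    rw [Mentry]
    simp only [brF, map_zero, mul_zero, Finset.sum_const_zero, add_zero]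
    split_ifs <;> simp
  have colH : ∀ i : Fin (2*m+1+f), i ≠ idxH m f → M i (idxH m f) = 0 := by
    intro i hi
    rw [Mentry]
    simp [brHcol _ _ hi, hi]
  set A22 : Matrix (Fin (2*m)) (Fin (2*m)) (MvPolynomial (Fin (2*m+1+f+1)) ℂ) :=
    Matrix.of fun i j => M (idxXi m f i) (idxXi m f j) with hA22
  have hdet : M.det = (M (idxH m f) (idxH m f) * A22.det) *
      (MvPolynomial.X 0 : MvPolynomial (Fin (2*m+1+f+1)) ℂ) ^ f := by
    rw [← Matrix.det_submatrix_equiv_self (HeisAux.heisEquiv m f) M]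
    have hblocks : M.submatrix (HeisAux.heisEquiv m f) (HeisAux.heisEquiv m f) =
        Matrix.fromBlocks
          (Matrix.fromBlocks
            (Matrix.of fun _ _ : Unit => M (idxH m f) (idxH m f))
            (Matrix.of fun (_ : Unit) j => M (idxH m f) (idxXi m f j))
            0 A22)
          (Matrix.of fun i β => M (HeisAux.heisEquiv m f (Sum.inl i)) (idxF m f β))
          0
          ((MvPolynomial.X 0 : MvPolynomial (Fin (2*m+1+f+1)) ℂ) • 1) := by
      refine Matrix.ext fun i j => ?_
      rcases i with (⟨⟩ | x) | α <;> rcases j with (⟨⟩ | y) | β <;>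
        simp only [Matrix.submatrix_apply, HeisAux.heisEquiv, Equiv.coe_fn_mk, Sum.elim_inl,
          Sum.elim_inr, Matrix.fromBlocks_apply₁₁, Matrix.fromBlocks_apply₁₂,
          Matrix.fromBlocks_apply₂₁, Matrix.fromBlocks_apply₂₂, hA22, Matrix.of_apply,
          Matrix.zero_apply, Matrix.smul_apply, Matrix.one_apply, smul_eq_mul]
      · exact colH _ (HeisAux.idxXi_ne_idxH m f x)
      · exact colH _ (HeisAux.idxF_ne_idxH m f α)
      · rw [rowF, if_neg (Ne.symm (HeisAux.idxXi_ne_idxF m f y α))]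
      · rw [rowF]
        rcases eq_or_ne α β with rfl | hne
        · simp
        · rw [if_neg (fun h => hne ((HeisAux.idxF_inj m f).mp h)), if_neg hne, mul_zero]
    rw [hblocks, Matrix.det_fromBlocks_zero₂₁, Matrix.det_fromBlocks_zero₂₁,
      Matrix.det_unique, Matrix.det_smul, Matrix.det_one, mul_one, Fintype.card_fin,
      Matrix.of_apply]
  set w : MvPolynomial (Fin (2*m+1+f)) ℂ := ∑ k : Fin (2*m+1+f),
      MvPolynomial.X k * MvPolynomial.C ((b.repr ⁅b k, b (idxH m f)⁆) (idxH m f)) with hw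
  have hC : ∀ c : ℂ, MvPolynomial.finSuccEquiv ℂ (2*m+1+f) (MvPolynomial.C c) =
      Polynomial.C (MvPolynomial.C c) := by
    intro c
    rw [MvPolynomial.finSuccEquiv_apply, MvPolynomial.eval₂Hom_C, RingHom.comp_apply]
  have part1 : MvPolynomial.finSuccEquiv ℂ (2*m+1+f) (M (idxH m f) (idxH m f)) =
      Polynomial.X + Polynomial.C w := by
    rw [Mentry, hw]
    simp only [eq_self_iff_true, if_true, map_add, map_sum, _root_.map_mul, map_one, mul_one,
      MvPolynomial.finSuccEquiv_X_zero, MvPolynomial.finSuccEquiv_X_succ, hC, Polynomial.C_mul]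
  set E : Matrix (Fin (2*m)) (Fin (2*m)) (MvPolynomial (Fin (2*m+1+f)) ℂ) :=
    Matrix.of fun i j => ∑ k : Fin (2*m+1+f),
      MvPolynomial.X k * MvPolynomial.C ((b.repr ⁅b k, b (idxXi m f j)⁆) (idxXi m f i)) with hE
  have part2 : MvPolynomial.finSuccEquiv ℂ (2*m+1+f) A22.det = (-E).charpoly := by
    have hmapdet := AlgHom.map_det (MvPolynomial.finSuccEquiv ℂ (2*m+1+f)).toAlgHom A22
    have hmat : A22.map (⇑(MvPolynomial.finSuccEquiv ℂ (2*m+1+f))) = Matrix.charmatrix (-E) := by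
      refine Matrix.ext fun i j => ?_
      by_cases hij : i = j
      · subst hij
        rw [Matrix.map_apply, Matrix.charmatrix_apply_eq, hA22, Matrix.of_apply, Mentry,
          Matrix.neg_apply, map_neg, sub_neg_eq_add, hE, Matrix.of_apply]
        simp only [eq_self_iff_true, if_true, map_add, map_sum, _root_.map_mul, map_one,
          mul_one, MvPolynomial.finSuccEquiv_X_zero, MvPolynomial.finSuccEquiv_X_succ, hC,
          Polynomial.C_mul]
      · rw [Matrix.map_apply, Matrix.charmatrix_apply_ne _ _ _ hij, hA22, Matrix.of_apply,
          Mentry, Matrix.neg_apply, map_neg, neg_neg, hE, Matrix.of_apply]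
        have hne : idxXi m f i ≠ idxXi m f j := fun h => hij ((HeisAux.idxXi_inj m f).mp h)
        simp only [if_neg hne, mul_zero, zero_add, map_sum, _root_.map_mul,
          MvPolynomial.finSuccEquiv_X_succ, hC, Polynomial.C_mul]
    rw [Matrix.charpoly, ← hmat]
    simpa [AlgHom.mapMatrix_apply] using hmapdet
  have hmonic : (MvPolynomial.finSuccEquiv ℂ (2*m+1+f)
      (M (idxH m f) (idxH m f) * A22.det)).Monic := by
    rw [map_mul, part1, part2]
    exact (Polynomial.monic_X_add_C w).mul (Matrix.charpoly_monic _)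
  have hdegg : (MvPolynomial.finSuccEquiv ℂ (2*m+1+f)
      (M (idxH m f) (idxH m f) * A22.det)).natDegree = 2*m+1 := by
    rw [map_mul, part1, part2,
      Polynomial.Monic.natDegree_mul (Polynomial.monic_X_add_C w) (Matrix.charpoly_monic _),
      Polynomial.natDegree_X_add_C, Matrix.charpoly_natDegree_eq_dim, Fintype.card_fin]
    omega
  have hg0 : M (idxH m f) (idxH m f) * A22.det ≠ 0 := by
    intro h
    rw [h, map_zero] at hmonic
    exact hmonic.ne_zero rfl
  rw [hQ, hdet]
  calc numIrreducibleFactors ((M (idxH m f) (idxH m f) * A22.det) *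
        (MvPolynomial.X 0 : MvPolynomial (Fin (2*m+1+f+1)) ℂ) ^ f)
      ≤ numIrreducibleFactors (M (idxH m f) (idxH m f) * A22.det) +
        numIrreducibleFactors ((MvPolynomial.X 0 : MvPolynomial (Fin (2*m+1+f+1)) ℂ) ^ f) :=
        HeisAux.numIrr_mul_le hg0 (pow_ne_zero _ (MvPolynomial.X_ne_zero _))
    _ ≤ (2*m+1) + 1 :=
        add_le_add ((HeisAux.numIrr_le_of_monic _ hmonic).trans hdegg.le)
          (HeisAux.numIrr_prime_pow_le (HeisAux.prime_X0 (2*m+1+f)) f)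
    _ = 2*m+2 := by omega
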